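/- Product rewriting identity for q-shifted factorials with integer differences: let q be a complex number with 0 < |q| < 1, let r be a positive integer, let x_1, …, x_r be nonzero complex numbers with x_i ≠ x_j for i < j (and such that all factors below are well defined), and let k_1, …, k_r be integers with |k| = k_1 + ⋯ + k_r. Then ∏_{i,j=1}^{r} ((x_i/x_j) q; q)_{k_i - k_j} = (-1)^{(r-1)|k|} q^{-|k|(|k|-1)/2 + r ∑_{i=1}^{r} k_i(k_i-1)/2} ∏_{i=1}^{r} x_i^{r k_i - |k|} ∏_{1≤i<j≤r} ( (x_i q^{k_i} - x_j q^{k_j}) / (x_i - x_j) ). -/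

import Mathlib

/-- The infinite q-shifted factorial `(a;q)_∞ = ∏_{j ≥ 0} (1 - a q^j)`. -/
noncomputable def qPochInf (a q : ℂ) : ℂ := ∏' j : ℕ, (1 - a * q ^ j)

/-- The q-shifted factorial with integer index, `(a;q)_k = (a;q)_∞ / (a q^k;q)_∞`. -/
noncomputable def qPochInt (a q : ℂ) (k : ℤ) : ℂ :=
  qPochInf a q / qPochInf (a * q ^ k) q

open Finset Filter

lemma qp_multipliable (a : ℂ) {q : ℂ} (hq : ‖q‖ < 1) :
    Multipliable (fun j : ℕ => 1 - a * q ^ j) := by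
  by_cases hz : ∃ j₀, 1 - a * q ^ j₀ = 0
  · obtain ⟨j₀, hj₀⟩ := hz
    refine ⟨0, ?_⟩
    unfold HasProd
    refine Tendsto.congr' ?_ tendsto_const_nhds
    filter_upwards [Filter.eventually_ge_atTop ({j₀} : Finset ℕ)] with s hs
    exact (Finset.prod_eq_zero (hs (Finset.mem_singleton_self j₀)) hj₀).symm
  · push_neg at hz
    have hlog : Summable (fun n : ℕ => Complex.log (1 - a * q ^ n)) := by
      have hgeo : Summable (fun n : ℕ => (3/2 : ℝ) * (‖a‖ * ‖q‖ ^ n)) :=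
        ((summable_geometric_of_lt_one (norm_nonneg q) hq).mul_left _).mul_left _
      refine Summable.of_norm_bounded_eventually hgeo ?_
      rw [Nat.cofinite_eq_atTop]
      have htend : Tendsto (fun n : ℕ => ‖a‖ * ‖q‖ ^ n) atTop (nhds 0) := by
        simpa using (tendsto_pow_atTop_nhds_zero_of_lt_one (norm_nonneg q) hq).const_mul
          (‖a‖)
      filter_upwards [htend.eventually_le_const (by norm_num : (0:ℝ) < 1/2)] with n hn
      have h1 : ‖-(a * q ^ n)‖ ≤ 1/2 := by
        simpa [map_mul, map_pow] using hn
      have := Complex.norm_log_one_add_half_le_self h1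
      rw [show (1 : ℂ) + -(a * q ^ n) = 1 - a * q ^ n by ring] at this
      calc ‖Complex.log (1 - a * q ^ n)‖ ≤ 3/2 * ‖-(a * q ^ n)‖ := this
        _ ≤ 3/2 * (‖a‖ * ‖q‖ ^ n) := by
            simp [map_mul, map_pow]
    exact Complex.multipliable_of_summable_log hlog

lemma qp_telescope (a : ℂ) {q : ℂ} (hq : ‖q‖ < 1) (n : ℕ) :
    qPochInf a q = (∏ j ∈ Finset.range n, (1 - a * q ^ j)) * qPochInf (a * q ^ n) q := by
  have h : Multipliable (fun j : ℕ => 1 - a * q ^ (j + n)) := by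
    have := qp_multipliable (a * q ^ n) hq
    refine this.congr fun j => ?_
    rw [pow_add]; ring
  have key := Multipliable.prod_mul_tprod_nat_mul' (f := fun j : ℕ => 1 - a * q ^ j) (k := n) h
  unfold qPochInf
  rw [← key]
  congr 1
  exact tprod_congr fun j => by show 1 - a * q ^ (j + n) = _; rw [pow_add]; ring

lemma qPochInt_natCast (a : ℂ) {q : ℂ} (hq : ‖q‖ < 1) (n : ℕ)
    (h : qPochInf (a * q ^ (n:ℤ)) q ≠ 0) :
    qPochInt a q (n:ℤ) = ∏ j ∈ Finset.range n, (1 - a * q ^ j) := by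
  rw [zpow_natCast] at h
  rw [qPochInt, zpow_natCast, qp_telescope a hq n, mul_div_assoc, div_self h, mul_one]

lemma half_mul (m : ℤ) : 2 * (m * (m - 1) / 2) = m * (m - 1) := by
  refine Int.mul_ediv_cancel' ?_
  rcases Int.even_or_odd m with ⟨t, ht⟩ | ⟨t, ht⟩
  · exact ⟨t * (m - 1), by rw [ht]; ring⟩
  · exact ⟨m * t, by rw [ht]; ring⟩

lemma prod_zpow_sum {α : Type*} (s : Finset α) {c : ℂ} (hc : c ≠ 0) (e : α → ℤ) :
    ∏ i ∈ s, c ^ e i = c ^ (∑ i ∈ s, e i) := by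
  induction s using Finset.cons_induction with
  | empty => simp
  | cons a s ha ih => rw [Finset.prod_cons, Finset.sum_cons, ih, ← zpow_add₀ hc]

lemma zpow_mul_zpow_neg {c : ℂ} (hc : c ≠ 0) (t : ℤ) : c ^ t * c ^ (-t) = 1 := by
  rw [← zpow_add₀ hc]; simp

lemma neg_one_zpow_sq (t : ℤ) : (-1 : ℂ) ^ t * (-1 : ℂ) ^ t = 1 := by
  rw [← zpow_add₀ (by norm_num : (-1:ℂ) ≠ 0), show t + t = 2 * t by ring, zpow_mul]
  norm_num

lemma gauss_int : ∀ N : ℕ, (∑ j ∈ Finset.range N, (j:ℤ)) * 2 = (N:ℤ) * ((N:ℤ) - 1) := by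
  intro N; induction N with
  | zero => simp
  | succ N ih => rw [Finset.sum_range_succ, add_mul, ih]; push_cast; ring

lemma pair_nat {q : ℂ} (hq : q ≠ 0) (hq1 : ‖q‖ < 1) {u : ℂ} (hu0 : u ≠ 0)
    (hu1 : 1 - u ≠ 0) (n : ℕ)
    (hA : qPochInf (u * q * q ^ (n:ℤ)) q ≠ 0)
    (hB : qPochInf (u⁻¹ * q * q ^ (-(n:ℤ))) q ≠ 0) :
    qPochInt (u * q) q (n:ℤ) * qPochInt (u⁻¹ * q) q (-(n:ℤ)) =
      (-1 : ℂ) ^ (n:ℤ) * u ^ (n:ℤ) * q ^ ((n:ℤ) * ((n:ℤ) - 1) / 2) *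
        ((1 - u * q ^ (n:ℤ)) / (1 - u)) := by
  have hA' : qPochInt (u * q) q (n:ℤ) = ∏ j ∈ Finset.range n, (1 - u * q * q ^ j) :=
    qPochInt_natCast _ hq1 n hA
  have htel := qp_telescope (u⁻¹ * q * q ^ (-(n:ℤ))) hq1 n
  have hbq : u⁻¹ * q * q ^ (-(n:ℤ)) * q ^ n = u⁻¹ * q := by
    rw [← zpow_natCast q n, mul_assoc, ← zpow_add₀ hq]
    simp
  rw [hbq] at htel
  have hP : (∏ j ∈ Finset.range n, (1 - u⁻¹ * q * q ^ (-(n:ℤ)) * q ^ j)) ≠ 0 :=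
    fun h0 => hB (by rw [htel, h0, zero_mul])
  have hI : qPochInf (u⁻¹ * q) q ≠ 0 :=
    fun h0 => hB (by rw [htel, h0, mul_zero])
  have hB' : qPochInt (u⁻¹ * q) q (-(n:ℤ)) =
      (∏ j ∈ Finset.range n, (1 - u⁻¹ * q * q ^ (-(n:ℤ)) * q ^ j))⁻¹ := by
    rw [qPochInt, htel, mul_comm (∏ j ∈ Finset.range n, (1 - u⁻¹ * q * q ^ (-(n:ℤ)) * q ^ j))
      (qPochInf (u⁻¹ * q) q), ← div_div, div_self hI, one_div]
  have huu : u⁻¹ * u = 1 := inv_mul_cancel₀ hu0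
  have hfac : ∀ j ∈ Finset.range n, 1 - u⁻¹ * q * q ^ (-(n:ℤ)) * q ^ j
      = -(u⁻¹ * q ^ (1 - (n:ℤ) + j)) * (1 - u * q ^ ((n:ℤ) - 1 - j)) := by
    intro j _
    have h1 : q * q ^ (-(n:ℤ)) * q ^ j = q ^ (1 - (n:ℤ) + j) := by
      rw [← zpow_natCast q j, show (1 - (n:ℤ) + j) = 1 + (-(n:ℤ)) + j by ring,
        zpow_add₀ hq, zpow_add₀ hq, zpow_one]
    have h2 : u⁻¹ * q * q ^ (-(n:ℤ)) * q ^ j = u⁻¹ * q ^ (1 - (n:ℤ) + j) := by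
      rw [← h1]; ring
    rw [h2]
    have hcc : q ^ (1 - (n:ℤ) + j) * q ^ ((n:ℤ) - 1 - j) = 1 := by
      rw [← zpow_add₀ hq, show (1 - (n:ℤ) + j) + ((n:ℤ) - 1 - j) = 0 by ring, zpow_zero]
    linear_combination (-(q ^ (1 - (n:ℤ) + j) * q ^ ((n:ℤ) - 1 - j))) * huu - hcc
  have hsum : (∑ j ∈ Finset.range n, (1 - (n:ℤ) + j)) = -((n:ℤ) * ((n:ℤ) - 1) / 2) := by
    apply mul_left_cancel₀ (by norm_num : (2:ℤ) ≠ 0)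
    rw [Finset.mul_sum, mul_neg, half_mul]
    rw [Finset.sum_congr rfl (fun j _ => by ring :
      ∀ j ∈ Finset.range n, 2 * (1 - (n:ℤ) + j) = 2 * (j:ℤ) + (2 - 2*(n:ℤ))),
      Finset.sum_add_distrib, Finset.sum_const, Finset.card_range, ← Finset.mul_sum,
      nsmul_eq_mul]
    linear_combination gauss_int n
  have hProd : (∏ j ∈ Finset.range n, (1 - u⁻¹ * q * q ^ (-(n:ℤ)) * q ^ j)) =
      ((-1:ℂ) ^ (n:ℤ) * u ^ (-(n:ℤ)) * q ^ (-((n:ℤ) * ((n:ℤ) - 1) / 2))) *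
        ∏ j ∈ Finset.range n, (1 - u * q ^ j) := by
    rw [Finset.prod_congr rfl hfac, Finset.prod_mul_distrib]
    congr 1
    · rw [Finset.prod_congr rfl (fun j _ => by ring :
        ∀ j ∈ Finset.range n, -(u⁻¹ * q ^ (1 - (n:ℤ) + j)) = (-1) * u⁻¹ * q ^ (1 - (n:ℤ) + j)),
        Finset.prod_mul_distrib, Finset.prod_mul_distrib, Finset.prod_const, Finset.prod_const,
        Finset.card_range, prod_zpow_sum _ hq, hsum]
      rw [inv_pow, ← zpow_natCast u n, ← zpow_neg, ← zpow_natCast (-1 : ℂ) n]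
    · rw [Finset.prod_congr rfl (fun j hj => by
        have hj' := Finset.mem_range.mp hj
        have he : ((n:ℤ) - 1 - j) = ((n - 1 - j : ℕ) : ℤ) := by omega
        rw [he, zpow_natCast] :
        ∀ j ∈ Finset.range n, 1 - u * q ^ ((n:ℤ) - 1 - j) = 1 - u * q ^ ((n - 1 - j : ℕ)))]
      exact Finset.prod_range_reflect (fun j => 1 - u * q ^ j) n
  have hAfin : (1 - u) * (∏ j ∈ Finset.range n, (1 - u * q * q ^ j)) =
      (1 - u * q ^ (n:ℤ)) * ∏ j ∈ Finset.range n, (1 - u * q ^ j) := by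
    rw [Finset.prod_congr rfl (fun j _ => by rw [pow_succ]; ring :
      ∀ j ∈ Finset.range n, 1 - u * q * q ^ j = 1 - u * q ^ (j+1)), zpow_natCast]
    have h4 := (Finset.prod_range_succ' (fun j => 1 - u * q ^ j) n).symm.trans
      (Finset.prod_range_succ (fun j => 1 - u * q ^ j) n)
    simp only [pow_zero, mul_one] at h4
    linear_combination h4
  have hP₀ : (∏ j ∈ Finset.range n, (1 - u * q ^ j)) ≠ 0 := by
    rw [hProd] at hP
    exact right_ne_zero_of_mul hP
  rw [hA', hB', hProd]
  have hc1 : ((-1:ℂ)) ^ (n:ℤ) * ((-1:ℂ)) ^ (n:ℤ) = 1 := neg_one_zpow_sq _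
  have hc2 := zpow_mul_zpow_neg hu0 (n:ℤ)
  have hc3 := zpow_mul_zpow_neg hq ((n:ℤ) * ((n:ℤ) - 1) / 2)
  have hne1 : ((-1:ℂ)) ^ (n:ℤ) ≠ 0 := zpow_ne_zero _ (by norm_num)
  have hne2 : u ^ (-(n:ℤ)) ≠ 0 := zpow_ne_zero _ hu0
  have hne3 : q ^ (-((n:ℤ) * ((n:ℤ) - 1) / 2)) ≠ 0 := zpow_ne_zero _ hq
  rw [← div_eq_mul_inv, mul_div_assoc']
  rw [div_eq_div_iff (mul_ne_zero (mul_ne_zero (mul_ne_zero hne1 hne2) hne3) hP₀) hu1]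
  linear_combination hAfin - (1 - u * q ^ (n:ℤ)) * (∏ j ∈ Finset.range n, (1 - u * q ^ j)) *
    ((u ^ (n:ℤ) * u ^ (-(n:ℤ)) * (q ^ ((n:ℤ) * ((n:ℤ) - 1) / 2) * q ^ (-((n:ℤ) * ((n:ℤ) - 1) / 2)))) * hc1 +
      (q ^ ((n:ℤ) * ((n:ℤ) - 1) / 2) * q ^ (-((n:ℤ) * ((n:ℤ) - 1) / 2))) * hc2 + hc3)

lemma pair_int {q : ℂ} (hq : q ≠ 0) (hq1 : ‖q‖ < 1) {u : ℂ} (hu0 : u ≠ 0)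
    (hu1 : 1 - u ≠ 0) (m : ℤ)
    (hA : qPochInf (u * q * q ^ m) q ≠ 0)
    (hB : qPochInf (u⁻¹ * q * q ^ (-m)) q ≠ 0) :
    qPochInt (u * q) q m * qPochInt (u⁻¹ * q) q (-m) =
      (-1 : ℂ) ^ m * u ^ m * q ^ (m * (m - 1) / 2) * ((1 - u * q ^ m) / (1 - u)) := by
  rcases le_or_gt 0 m with hm | hm
  · obtain ⟨n, rfl⟩ := Int.eq_ofNat_of_zero_le hm
    exact pair_nat hq hq1 hu0 hu1 n hA hB
  · obtain ⟨n, rfl⟩ : ∃ n : ℕ, m = -(n:ℤ) := ⟨(-m).toNat, by omega⟩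
    have hu0' : u⁻¹ ≠ 0 := inv_ne_zero hu0
    have hu1' : 1 - u⁻¹ ≠ 0 := by
      intro h
      have h1 : u⁻¹ = 1 := by linear_combination -h
      exact hu1 (by rw [← inv_inv u, h1]; norm_num)
    have hA' : qPochInf (u⁻¹ * q * q ^ ((n:ℕ):ℤ)) q ≠ 0 := by
      simpa using hB
    have hB' : qPochInf ((u⁻¹)⁻¹ * q * q ^ (-((n:ℕ):ℤ))) q ≠ 0 := by
      rw [inv_inv]
      exact hA
    have key := pair_nat hq hq1 hu0' hu1' n hA' hB'
    rw [inv_inv] at key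
    rw [neg_neg]
    rw [mul_comm (qPochInt (u * q) q (-(n:ℤ)))]
    rw [key]
    have huu : u⁻¹ * u = 1 := inv_mul_cancel₀ hu0
    have hqq : q ^ ((n:ℕ):ℤ) * q ^ (-((n:ℕ):ℤ)) = 1 := zpow_mul_zpow_neg hq _
    have h1 : (-1:ℂ) ^ (-((n:ℕ):ℤ)) = (-1:ℂ) ^ ((n:ℕ):ℤ) := by
      rw [zpow_neg]
      exact inv_eq_of_mul_eq_one_right (neg_one_zpow_sq _)
    have h2 : (u⁻¹) ^ ((n:ℕ):ℤ) = u ^ (-((n:ℕ):ℤ)) := by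
      rw [inv_zpow, ← zpow_neg]
    have h3 : q ^ ((-((n:ℕ):ℤ)) * ((-((n:ℕ):ℤ)) - 1) / 2) =
        q ^ (((n:ℕ):ℤ) * (((n:ℕ):ℤ) - 1) / 2) * q ^ ((n:ℕ):ℤ) := by
      rw [← zpow_add₀ hq]
      congr 1
      apply mul_left_cancel₀ (by norm_num : (2:ℤ) ≠ 0)
      rw [half_mul, mul_add, half_mul]
      ring
    have h4 : (1 - u⁻¹ * q ^ ((n:ℕ):ℤ)) / (1 - u⁻¹) =
        q ^ ((n:ℕ):ℤ) * ((1 - u * q ^ (-((n:ℕ):ℤ))) / (1 - u)) := by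
      rw [mul_div_assoc', div_eq_div_iff hu1' hu1]
      linear_combination (q ^ ((n:ℕ):ℤ) - 1) * huu + (u - u⁻¹ * u) * hqq
    rw [h1, h2, h3, h4]
    ring

@[to_additive]
lemma prod_split {M : Type*} [CommMonoid M] {r : ℕ} (f : Fin r → Fin r → M) :
    ∏ i, ∏ j, f i j =
      (∏ i, f i i) * ∏ i, ∏ j ∈ Finset.univ.filter (fun j => i < j), (f i j * f j i) := by
  have hsplit : ∀ i : Fin r, ∏ j, f i j =
      f i i * ((∏ j ∈ Finset.univ.filter (fun j => i < j), f i j) *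
        (∏ j ∈ Finset.univ.filter (fun j => j < i), f i j)) := by
    intro i
    rw [← Finset.prod_filter_mul_prod_filter_not Finset.univ (fun j => i < j) (f i)]
    have hins : Finset.univ.filter (fun j => ¬ i < j) =
        insert i (Finset.univ.filter (fun j => j < i)) := by
      ext j
      simp only [Finset.mem_filter, Finset.mem_univ, true_and, Finset.mem_insert]
      constructor
      · intro h
        rcases lt_trichotomy i j with h' | h' | h'
        · exact absurd h' h
        · exact Or.inl h'.symm
        · exact Or.inr h'
      · rintro (rfl | h)
        · exact lt_irrefl _
        · exact lt_asymm h
    rw [hins, Finset.prod_insert (by simp)]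
    rw [mul_left_comm]
  rw [Finset.prod_congr rfl (fun i _ => hsplit i), Finset.prod_mul_distrib,
    Finset.prod_mul_distrib]
  congr 1
  have hcomm : (∏ i : Fin r, ∏ j ∈ Finset.univ.filter (fun j => j < i), f i j) =
      ∏ j : Fin r, ∏ i ∈ Finset.univ.filter (fun i => j < i), f i j := by
    exact Finset.prod_comm' (fun i j => by
      simp only [Finset.mem_filter, Finset.mem_univ, true_and, and_iff_right_iff_imp]
      tauto)
  rw [hcomm, ← Finset.prod_mul_distrib]
  exact Finset.prod_congr rfl (fun i _ => (Finset.prod_mul_distrib).symm)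

lemma sum_sign_exp {r : ℕ} (k : Fin r → ℤ) :
    ∑ i, ∑ j ∈ Finset.univ.filter (fun j => i < j), (k i + k j) =
      ((r:ℤ) - 1) * ∑ i, k i := by
  have hs := sum_split (fun i j : Fin r => k i + k j)
  have h1 : ∑ i : Fin r, ∑ j : Fin r, (k i + k j) = (r:ℤ) * (∑ i, k i) + (r:ℤ) * (∑ i, k i) := by
    simp [Finset.sum_add_distrib, Finset.sum_const, Finset.card_univ, Finset.mul_sum]
  have h2 : ∑ i : Fin r, (k i + k i) = 2 * ∑ i, k i := by
    rw [Finset.sum_add_distrib]; ring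
  have h3 : ∑ i : Fin r, ∑ j ∈ Finset.univ.filter (fun j => i < j), ((k i + k j) + (k j + k i))
      = 2 * ∑ i, ∑ j ∈ Finset.univ.filter (fun j => i < j), (k i + k j) := by
    rw [Finset.mul_sum]
    refine Finset.sum_congr rfl fun i _ => ?_
    rw [Finset.mul_sum]
    exact Finset.sum_congr rfl fun j _ => by ring
  rw [h1, h2, h3] at hs
  linarith

lemma sum_q_exp {r : ℕ} (k : Fin r → ℤ) :
    ∑ i, ∑ j ∈ Finset.univ.filter (fun j => i < j),
        ((k i - k j) * ((k i - k j) - 1) / 2 - k j) =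
      -((∑ i, k i) * ((∑ i, k i) - 1) / 2) + (r:ℤ) * ∑ i, (k i * (k i - 1) / 2) := by
  apply mul_left_cancel₀ (by norm_num : (4:ℤ) ≠ 0)
  have stage1 : 2 * ∑ i, ∑ j ∈ Finset.univ.filter (fun j => i < j),
      ((k i - k j) * ((k i - k j) - 1) / 2 - k j) =
      ∑ i, ∑ j ∈ Finset.univ.filter (fun j => i < j), ((k i - k j)^2 - k i - k j) := by
    rw [Finset.mul_sum]
    refine Finset.sum_congr rfl fun i _ => ?_
    rw [Finset.mul_sum]
    refine Finset.sum_congr rfl fun j _ => ?_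
    rw [mul_sub, half_mul]
    ring
  have hsplit := sum_split (fun i j : Fin r => (k i - k j)^2 - k i - k j)
  have hdiag : ∑ i : Fin r, ((k i - k i)^2 - k i - k i) = -(2 * ∑ i, k i) := by
    rw [Finset.sum_congr rfl (fun i (_ : i ∈ Finset.univ) => (by ring :
      (k i - k i)^2 - k i - k i = -2 * k i)), ← Finset.mul_sum]
    ring
  have hupper2 : ∑ i : Fin r, ∑ j ∈ Finset.univ.filter (fun j => i < j),
      (((k i - k j)^2 - k i - k j) + ((k j - k i)^2 - k j - k i))
      = 2 * ∑ i, ∑ j ∈ Finset.univ.filter (fun j => i < j), ((k i - k j)^2 - k i - k j) := by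
    rw [Finset.mul_sum]
    refine Finset.sum_congr rfl fun i _ => ?_
    rw [Finset.mul_sum]
    exact Finset.sum_congr rfl fun j _ => by ring
  have hfull : ∑ i : Fin r, ∑ j : Fin r, ((k i - k j)^2 - k i - k j)
      = 2*(r:ℤ)*(∑ i, (k i)^2) - 2*(∑ i, k i)^2 - 2*(r:ℤ)*(∑ i, k i) := by
    have hin : ∀ i : Fin r, ∑ j : Fin r, ((k i - k j)^2 - k i - k j) =
        (r:ℤ)*(k i)^2 - 2*(k i)*(∑ j, k j) + (∑ j, (k j)^2) - (r:ℤ)*(k i) - (∑ j, k j) := by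
      intro i
      rw [Finset.sum_congr rfl (fun j (_ : j ∈ Finset.univ) => (by ring :
        (k i - k j)^2 - k i - k j = ((k i)^2 - k i) + ((k j)^2 + (-2*(k i) - 1) * k j)))]
      rw [Finset.sum_add_distrib, Finset.sum_add_distrib, Finset.sum_const, Finset.card_univ,
        Fintype.card_fin, nsmul_eq_mul, ← Finset.mul_sum]
      ring
    rw [Finset.sum_congr rfl (fun i (_ : i ∈ Finset.univ) => hin i)]
    rw [Finset.sum_congr rfl (fun i (_ : i ∈ Finset.univ) => (by ring :
      (r:ℤ)*(k i)^2 - 2*(k i)*(∑ j, k j) + (∑ j, (k j)^2) - (r:ℤ)*(k i) - (∑ j, k j) =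
        (r:ℤ)*(k i)^2 + (-2*(∑ j, k j) - (r:ℤ)) * k i + ((∑ j, (k j)^2) - (∑ j, k j))))]
    rw [Finset.sum_add_distrib, Finset.sum_add_distrib, Finset.sum_const, Finset.card_univ,
      Fintype.card_fin, nsmul_eq_mul, ← Finset.mul_sum, ← Finset.mul_sum]
    ring
  have hCsum : 2 * ∑ i : Fin r, (k i * (k i - 1) / 2) = (∑ i, (k i)^2) - (∑ i, k i) := by
    rw [Finset.mul_sum, Finset.sum_congr rfl (fun i (_ : i ∈ Finset.univ) => half_mul (k i))]
    rw [Finset.sum_congr rfl (fun i (_ : i ∈ Finset.univ) => (by ring :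
      k i * (k i - 1) = (k i)^2 + (-1) * k i)), Finset.sum_add_distrib, ← Finset.mul_sum]
    ring
  have hKhalf : 2 * ((∑ i : Fin r, k i) * ((∑ i, k i) - 1) / 2) =
      (∑ i, k i) * ((∑ i, k i) - 1) := half_mul _
  -- combine everything linearly
  have e1 : (4:ℤ) * (∑ i, ∑ j ∈ Finset.univ.filter (fun j => i < j),
      ((k i - k j) * ((k i - k j) - 1) / 2 - k j)) =
      2 * ∑ i, ∑ j ∈ Finset.univ.filter (fun j => i < j), ((k i - k j)^2 - k i - k j) := by
    rw [← stage1]; ring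
  rw [e1]
  have e2 : (4:ℤ) * (-((∑ i, k i) * ((∑ i, k i) - 1) / 2) + (r:ℤ) * ∑ i, (k i * (k i - 1) / 2))
      = -(2 * (2 * ((∑ i, k i) * ((∑ i, k i) - 1) / 2))) +
        2*(r:ℤ) * (2 * ∑ i, (k i * (k i - 1) / 2)) := by ring
  rw [hKhalf, hCsum] at e2
  rw [e2]
  rw [hupper2, hfull, hdiag] at hsplit
  linarith [hsplit]

/-- Product rewriting identity for q-shifted factorials with integer differences:
`∏_{i,j} ((x_i/x_j)q;q)_{k_i-k_j} = (-1)^{(r-1)|k|}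
 q^{-C(|k|,2) + r∑ C(k_i,2)} ∏_i x_i^{r k_i - |k|}
 ∏_{i<j} ((x_i q^{k_i}-x_j q^{k_j})/(x_i-x_j))`. -/
theorem qpoch_product_rewrite (q : ℂ) (hq0 : 0 < ‖q‖)
    (hq1 : ‖q‖ < 1) (r : ℕ) (hr : 0 < r) (x : Fin r → ℂ)
    (hx : ∀ i, x i ≠ 0) (hxx : ∀ i j : Fin r, i < j → x i ≠ x j)
    (k : Fin r → ℤ)
    (hwd : ∀ i j : Fin r, qPochInf (x i / x j * q * q ^ (k i - k j)) q ≠ 0) :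
    ∏ i, ∏ j, qPochInt (x i / x j * q) q (k i - k j) =
      (-1 : ℂ) ^ (((r : ℤ) - 1) * ∑ i, k i) *
        q ^ (-((∑ i, k i) * ((∑ i, k i) - 1) / 2) +
          (r : ℤ) * ∑ i, (k i * (k i - 1) / 2)) *
        (∏ i, x i ^ ((r : ℤ) * k i - ∑ j, k j)) *
        ∏ i, ∏ j ∈ Finset.univ.filter (fun j => i < j),
          (x i * q ^ k i - x j * q ^ k j) / (x i - x j) := by
  have hq : q ≠ 0 := by
    intro h; rw [h] at hq0; simp at hq0
  rw [prod_split (fun i j => qPochInt (x i / x j * q) q (k i - k j))]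
  have hdiag : (∏ i : Fin r, qPochInt (x i / x i * q) q (k i - k i)) = 1 := by
    refine Finset.prod_eq_one fun i _ => ?_
    have h := hwd i i
    rw [sub_self, zpow_zero, mul_one] at h
    rw [sub_self, qPochInt, zpow_zero, mul_one]
    exact div_self h
  rw [hdiag, one_mul]
  have hpair : ∀ i : Fin r, ∀ j ∈ Finset.univ.filter (fun j => i < j),
      qPochInt (x i / x j * q) q (k i - k j) * qPochInt (x j / x i * q) q (k j - k i) =
      (-1:ℂ) ^ (k i + k j) * (x i ^ (k i - k j) * x j ^ (k j - k i)) *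
        q ^ ((k i - k j) * ((k i - k j) - 1) / 2 - k j) *
        ((x i * q ^ (k i) - x j * q ^ (k j)) / (x i - x j)) := by
    intro i j hj
    have hij : i < j := by simpa using hj
    have hu0 : x i / x j ≠ 0 := div_ne_zero (hx i) (hx j)
    have hxij : x i - x j ≠ 0 := sub_ne_zero.mpr (hxx i j hij)
    have hu1 : 1 - x i / x j ≠ 0 := by
      intro h
      rw [sub_eq_zero, eq_comm, div_eq_one_iff_eq (hx j)] at h
      exact hxx i j hij h
    have hB' : qPochInf ((x i / x j)⁻¹ * q * q ^ (-(k i - k j))) q ≠ 0 := by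
      rw [inv_div, neg_sub]
      exact hwd j i
    have key := pair_int hq hq1 hu0 hu1 (k i - k j) (hwd i j) hB'
    rw [inv_div, neg_sub] at key
    rw [key]
    have hsign : (-1:ℂ) ^ (k i - k j) = (-1:ℂ) ^ (k i + k j) := by
      rw [show k i - k j = (k i + k j) + 2 * (-(k j)) by ring,
        zpow_add₀ (by norm_num : (-1:ℂ) ≠ 0), zpow_mul]
      norm_num
    have hxpow : (x i / x j) ^ (k i - k j) = x i ^ (k i - k j) * x j ^ (k j - k i) := by
      rw [div_zpow, show k j - k i = -(k i - k j) by ring, zpow_neg, div_eq_mul_inv]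
    have hqpart : (1 - x i / x j * q ^ (k i - k j)) / (1 - x i / x j) =
        q ^ (-(k j)) * ((x i * q ^ (k i) - x j * q ^ (k j)) / (x i - x j)) := by
      have hqkj : q ^ (k j) ≠ 0 := zpow_ne_zero _ hq
      have hj1 : x j * (x j)⁻¹ = 1 := mul_inv_cancel₀ (hx j)
      have hj2 : q ^ (k j) * (q ^ (k j))⁻¹ = 1 := mul_inv_cancel₀ hqkj
      rw [zpow_sub₀ hq, zpow_neg]
      field_simp
      linear_combination (x i * q ^ (k i) - x i * q ^ (k j)) * hj1
    rw [hsign, hxpow, hqpart]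
    rw [show ((k i - k j) * ((k i - k j) - 1) / 2 - k j) =
      ((k i - k j) * ((k i - k j) - 1) / 2) + (-(k j)) by ring, zpow_add₀ hq]
    ring
  rw [Finset.prod_congr rfl (fun i _ => Finset.prod_congr rfl (fun j hj => hpair i j hj))]
  simp only [Finset.prod_mul_distrib]
  have hsignprod : (∏ i : Fin r, ∏ j ∈ Finset.univ.filter (fun j => i < j),
      (-1:ℂ) ^ (k i + k j)) = (-1:ℂ) ^ (((r:ℤ) - 1) * ∑ i, k i) := by
    rw [Finset.prod_congr rfl (fun i (_ : i ∈ Finset.univ) =>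
      prod_zpow_sum _ (by norm_num : (-1:ℂ) ≠ 0) (fun j => k i + k j)),
      prod_zpow_sum _ (by norm_num : (-1:ℂ) ≠ 0), sum_sign_exp]
  have hxprod : (∏ i : Fin r, ∏ j ∈ Finset.univ.filter (fun j => i < j), x i ^ (k i - k j)) *
      (∏ i : Fin r, ∏ j ∈ Finset.univ.filter (fun j => i < j), x j ^ (k j - k i)) =
      ∏ i, x i ^ ((r:ℤ) * k i - ∑ j, k j) := by
    rw [← Finset.prod_mul_distrib,
      Finset.prod_congr rfl (fun i (_ : i ∈ Finset.univ) => (Finset.prod_mul_distrib).symm)]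
    have hps := prod_split (fun i j : Fin r => x i ^ (k i - k j))
    have hd : (∏ i : Fin r, x i ^ (k i - k i)) = 1 :=
      Finset.prod_eq_one fun i _ => by rw [sub_self, zpow_zero]
    rw [hd, one_mul] at hps
    rw [← hps, Finset.prod_congr rfl (fun i (_ : i ∈ Finset.univ) =>
      prod_zpow_sum Finset.univ (hx i) (fun j => k i - k j))]
    refine Finset.prod_congr rfl fun i _ => ?_
    congr 1
    rw [Finset.sum_sub_distrib, Finset.sum_const, Finset.card_univ, Fintype.card_fin,
      nsmul_eq_mul]
  have hqprod : (∏ i : Fin r, ∏ j ∈ Finset.univ.filter (fun j => i < j),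
      q ^ ((k i - k j) * ((k i - k j) - 1) / 2 - k j)) =
      q ^ (-((∑ i, k i) * ((∑ i, k i) - 1) / 2) + (r:ℤ) * ∑ i, (k i * (k i - 1) / 2)) := by
    rw [Finset.prod_congr rfl (fun i (_ : i ∈ Finset.univ) =>
      prod_zpow_sum _ hq (fun j => (k i - k j) * ((k i - k j) - 1) / 2 - k j)),
      prod_zpow_sum _ hq, sum_q_exp]
  rw [hsignprod, hxprod, hqprod]
  ring
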